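/- Let ⊙ be a non-degenerate pseudo-multiplication on [0,∞] and let τ be a σ-maxitive measure on a measurable space (E, 𝔅) having the Radon–Nikodym property with respect to the idempotent ⊙-integral. Then τ is localizable: for every σ-ideal 𝓘 of 𝔅 there exists a measurable set L such that (i) τ(S \ L) = 0 for all S ∈ 𝓘, and (ii) for every measurable B with τ(S \ B) = 0 for all S ∈ 𝓘, one has τ(L \ B) = 0. -/

import Mathlib

open scoped ENNReal
open Set

/-- A pseudo-multiplication on `[0,∞]`: associative, monotone in each argument,
continuous on `(0,∞) × [0,∞]`, with `s ↦ s ⊙ t` continuous on `(0,∞]`,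
admitting a left identity, without zero divisors, and with `0` as annihilator. -/
structure PseudoMul where
  op : ℝ≥0∞ → ℝ≥0∞ → ℝ≥0∞
  assoc : ∀ a b c, op (op a b) c = op a (op b c)
  mono_left : ∀ t, Monotone fun s => op s t
  mono_right : ∀ s, Monotone fun t => op s t
  continuousOn : ContinuousOn (fun p : ℝ≥0∞ × ℝ≥0∞ => op p.1 p.2) (Ioo 0 ⊤ ×ˢ univ)
  continuousOn_left : ∀ t, ContinuousOn (fun s => op s t) (Ioi 0)
  one : ℝ≥0∞
  one_op : ∀ t, op one t = t
  no_zero_divisors : ∀ s t, op s t = 0 → s = 0 ∨ t = 0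
  zero_op : ∀ t, op 0 t = 0
  op_zero : ∀ t, op t 0 = 0

/-- An element `t` is `⊙`-finite if `⨅_{s>0} s ⊙ t = 0`. -/
def PseudoMul.OFinite (P : PseudoMul) (t : ℝ≥0∞) : Prop :=
  ⨅ s ∈ Ioi (0 : ℝ≥0∞), P.op s t = 0

/-- `⊙` is non-degenerate if its left identity is `⊙`-finite. -/
def PseudoMul.Nondegenerate (P : PseudoMul) : Prop :=
  P.OFinite P.one

/-- A σ-maxitive measure: vanishes on `∅` and turns countable unions of
measurable sets into suprema. -/
def SigmaMaxitive {E : Type*} [MeasurableSpace E] (ν : Set E → ℝ≥0∞) : Prop :=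
  ν ∅ = 0 ∧ ∀ B : ℕ → Set E, (∀ n, MeasurableSet (B n)) →
    ν (⋃ n, B n) = ⨆ n, ν (B n)

/-- The idempotent `⊙`-integral `∫_B f ⊙ dν = ⨆_{t ∈ [0,∞)} t ⊙ ν(B ∩ {f > t})`. -/
noncomputable def idemInt {E : Type*} [MeasurableSpace E] (P : PseudoMul) (ν : Set E → ℝ≥0∞)
    (f : E → ℝ≥0∞) (B : Set E) : ℝ≥0∞ :=
  ⨆ t ∈ Iio (⊤ : ℝ≥0∞), P.op t (ν (B ∩ {x | t < f x}))

/-- `ν ≪⊙ τ`: `ν(B) ≤ ∞ ⊙ τ(B)` whenever `τ(B)` is `⊙`-finite. -/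
def OAbsCont {E : Type*} [MeasurableSpace E] (P : PseudoMul)
    (ν τ : Set E → ℝ≥0∞) : Prop :=
  ∀ B : Set E, MeasurableSet B → P.OFinite (τ B) → ν B ≤ P.op ⊤ (τ B)

/-- `τ` is σ-`⊙`-finite. -/
def SigmaOFinite {E : Type*} [MeasurableSpace E] (P : PseudoMul)
    (τ : Set E → ℝ≥0∞) : Prop :=
  ∃ B : ℕ → Set E, (∀ n, MeasurableSet (B n)) ∧ (⋃ n, B n) = univ ∧
    ∀ n, P.OFinite (τ (B n))

/-- A σ-ideal of the σ-algebra: a nonempty collection of measurable sets closed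
under countable unions and under measurable subsets. -/
def IsSigmaIdeal {E : Type*} [MeasurableSpace E] (I : Set (Set E)) : Prop :=
  I.Nonempty ∧ (∀ A ∈ I, MeasurableSet A) ∧
    (∀ B : ℕ → Set E, (∀ n, B n ∈ I) → (⋃ n, B n) ∈ I) ∧
    (∀ A B : Set E, B ∈ I → A ⊆ B → MeasurableSet A → A ∈ I)

/-- `τ` is σ-principal. -/
def SigmaPrincipal {E : Type*} [MeasurableSpace E] (τ : Set E → ℝ≥0∞) : Prop :=
  ∀ I : Set (Set E), IsSigmaIdeal I → ∃ L ∈ I, ∀ S ∈ I, τ (S \ L) = 0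

/-- `τ` has the Radon–Nikodym property w.r.t. the idempotent `⊙`-integral. -/
def HasRNP {E : Type*} [MeasurableSpace E] (P : PseudoMul)
    (τ : Set E → ℝ≥0∞) : Prop :=
  ∀ ν : Set E → ℝ≥0∞, SigmaMaxitive ν → OAbsCont P ν τ →
    ∃ c : E → ℝ≥0∞, Measurable c ∧
      ∀ B : Set E, MeasurableSet B → ν B = idemInt P τ c B

/-- A σ-maxitive measure with the Radon–Nikodym property is localizable. -/
theorem localizable_of_rnp {E : Type*} [MeasurableSpace E]
    (P : PseudoMul) (hP : P.Nondegenerate)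
    (τ : Set E → ℝ≥0∞) (hτ : SigmaMaxitive τ) (hRNP : HasRNP P τ) :
    ∀ I : Set (Set E), IsSigmaIdeal I →
      ∃ L : Set E, MeasurableSet L ∧ (∀ S ∈ I, τ (S \ L) = 0) ∧
        ∀ B : Set E, MeasurableSet B → (∀ S ∈ I, τ (S \ B) = 0) →
          τ (L \ B) = 0 := by
  intro I hI
  obtain ⟨hne, hImeas, hIunion, hIsub⟩ := hI
  obtain ⟨hτ0, hτU⟩ := hτ
  -- monotonicity of τ on measurable sets
  have τmono : ∀ A B : Set E, MeasurableSet A → MeasurableSet B → A ⊆ B → τ A ≤ τ B := by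
    intro A B hA hB hAB
    have h := hτU (fun n => if n = 0 then A else B)
      (by intro n; cases n <;> simpa)
    have hU : (⋃ n, (fun n => if n = 0 then A else B) n) = B := by
      apply subset_antisymm
      · apply iUnion_subset; intro n; cases n
        · simpa
        · simp
      · intro x hx; exact mem_iUnion.2 ⟨1, by simpa⟩
    rw [hU] at h
    rw [h]
    exact le_iSup_of_le 0 (by simp)
  set ν : Set E → ℝ≥0∞ := fun B => ⨆ S ∈ I, τ (B ∩ S) with hνdef
  have hνmax : SigmaMaxitive ν := by
    constructor
    · refine le_antisymm ?_ zero_le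
      refine iSup₂_le fun S hS => ?_
      simp [hτ0]
    · intro B hB
      have : ∀ S ∈ I, τ ((⋃ n, B n) ∩ S) = ⨆ n, τ (B n ∩ S) := by
        intro S hS
        rw [iUnion_inter]
        exact hτU (fun n => B n ∩ S) fun n => (hB n).inter (hImeas S hS)
      calc ν (⋃ n, B n) = ⨆ S ∈ I, ⨆ n, τ (B n ∩ S) := by
            simp only [hνdef]
            exact iSup_congr fun S => iSup_congr fun hS => this S hS
        _ = ⨆ n, ⨆ S ∈ I, τ (B n ∩ S) := by
            refine le_antisymm (iSup₂_le fun S hS => iSup_le fun n => ?_)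
              (iSup_le fun n => iSup₂_le fun S hS => ?_)
            · exact le_iSup_of_le n (le_iSup₂_of_le S hS le_rfl)
            · exact le_iSup₂_of_le S hS (le_iSup_of_le n le_rfl)
        _ = ⨆ n, ν (B n) := rfl
  have hνle : ∀ B : Set E, MeasurableSet B → ν B ≤ τ B := by
    intro B hB
    refine iSup₂_le fun S hS => τmono _ _ (hB.inter (hImeas S hS)) hB inter_subset_left
  have hνac : OAbsCont P ν τ := by
    intro B hB _
    refine le_trans (hνle B hB) ?_
    calc τ B = P.op P.one (τ B) := (P.one_op _).symm
      _ ≤ P.op ⊤ (τ B) := P.mono_left (τ B) le_top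
  obtain ⟨c, hc, hcd⟩ := hRNP ν hνmax hνac
  set L : Set E := {x | 0 < c x} with hLdef
  have hL : MeasurableSet L := measurableSet_lt measurable_const hc
  refine ⟨L, hL, ?_, ?_⟩
  · -- τ (S \ L) = 0 for S ∈ I
    intro S hS
    have hSLmeas : MeasurableSet (S \ L) := (hImeas S hS).diff hL
    have hSLI : S \ L ∈ I := hIsub _ S hS diff_subset hSLmeas
    have hτν : τ (S \ L) ≤ ν (S \ L) := by
      refine le_iSup₂_of_le (S \ L) hSLI ?_
      rw [inter_self]
    have hν0 : ν (S \ L) = 0 := by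
      rw [hcd _ hSLmeas]
      refine le_antisymm (iSup₂_le fun t ht => ?_) zero_le
      have hempty : (S \ L) ∩ {x | t < c x} = ∅ := by
        ext x
        simp only [mem_inter_iff, mem_diff, mem_empty_iff_false, iff_false]
        rintro ⟨⟨hxS, hxL⟩, hxt⟩
        have hc0 : c x = 0 := by
          by_contra h
          exact hxL (pos_iff_ne_zero.mpr h)
        have hlt : t < c x := hxt
        rw [hc0] at hlt
        simp at hlt
      rw [hempty, hτ0, P.op_zero]
    exact le_antisymm (hτν.trans hν0.le) zero_le
  · -- maximality
    intro B hB hB0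
    have hLB : MeasurableSet (L \ B) := hL.diff hB
    have hν0 : ν (L \ B) = 0 := by
      refine le_antisymm (iSup₂_le fun S hS => ?_) zero_le
      have h1 : τ ((L \ B) ∩ S) ≤ τ (S \ B) :=
        τmono _ _ (hLB.inter (hImeas S hS)) ((hImeas S hS).diff hB)
          (fun x hx => ⟨hx.2, hx.1.2⟩)
      exact h1.trans_eq (hB0 S hS)
    have hint0 : ∀ t : ℝ≥0∞, t ∈ Iio ⊤ → P.op t (τ ((L \ B) ∩ {x | t < c x})) = 0 := by
      intro t ht
      have := hcd _ hLB
      rw [hν0] at this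
      have hle : P.op t (τ ((L \ B) ∩ {x | t < c x})) ≤ 0 := by
        rw [this]
        exact le_iSup₂_of_le t ht le_rfl
      exact le_antisymm hle zero_le
    have hpiece : ∀ n : ℕ, τ ((L \ B) ∩ {x | ((n : ℝ≥0∞) + 1)⁻¹ < c x}) = 0 := by
      intro n
      have htne : ((n : ℝ≥0∞) + 1)⁻¹ ≠ 0 := by
        simp [ENNReal.inv_ne_zero]
      have htlt : ((n : ℝ≥0∞) + 1)⁻¹ ∈ Iio (⊤ : ℝ≥0∞) := by
        simp [ENNReal.inv_lt_top]
      have h0 := hint0 _ htlt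
      rcases P.no_zero_divisors _ _ h0 with h | h
      · exact absurd h htne
      · exact h
    have hcover : L \ B = ⋃ n : ℕ, (L \ B) ∩ {x | ((n : ℝ≥0∞) + 1)⁻¹ < c x} := by
      apply subset_antisymm
      · intro x hx
        have hcx : c x ≠ 0 := by
          have : 0 < c x := hx.1
          exact this.ne'
        obtain ⟨n, hn⟩ := ENNReal.exists_inv_nat_lt hcx
        refine mem_iUnion.2 ⟨n, hx, ?_⟩
        calc ((n : ℝ≥0∞) + 1)⁻¹ ≤ (n : ℝ≥0∞)⁻¹ :=
              ENNReal.inv_le_inv.mpr (le_add_of_nonneg_right zero_le)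
          _ < c x := hn
      · exact iUnion_subset fun n => inter_subset_left
    rw [hcover, hτU _ fun n => hLB.inter (measurableSet_lt measurable_const hc)]
    simp [hpiece]
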